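/- arXiv:2010.15541 — 2 statements merged into one kernel-verified Lean document; each statement's English description precedes it below -/
import Mathlib

section
/- Let κ ∈ ℝ, let e₁, e₂, e₃ be the standard orthonormal basis of ℝ³, let m, φ ∈ ℝ³, and let v₁, v₂, v₃, w₁, w₂, w₃ ∈ ℝ³ with vᵢ·m = 0 for i = 1, 2, 3. Then Σ_{i=1}^{3} (vᵢ − κ(eᵢ × m)) · (wᵢ × m + φ × vᵢ − κ eᵢ × (φ × m)) = Σ_{i=1}^{3} (m × (vᵢ − κ(eᵢ × m))) · wᵢ + κ Σ_{i=1}^{3} ((vᵢ·eᵢ)(m·φ) − (m·eᵢ)(vᵢ·φ)). -/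
noncomputable section
open scoped RealInnerProductSpace

/-- Euclidean 3-space. -/
abbrev R3 := EuclideanSpace ℝ (Fin 3)

/-- The cross product on `R3`. -/
def cross (u v : R3) : R3 :=
  (WithLp.equiv 2 (Fin 3 → ℝ)).symm
    ![u 1 * v 2 - u 2 * v 1, u 2 * v 0 - u 0 * v 2, u 0 * v 1 - u 1 * v 0]

/-- The standard orthonormal basis vectors of `R3`. -/
def e (i : Fin 3) : R3 := EuclideanSpace.single i 1

set_option maxHeartbeats 1000000 in
/-- Pointwise form of the key algebraic identity (3.15): the Frobenius product of helical
derivative matrices 𝔇u : 𝔇(φ × u). -/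
theorem stmt_10 (κ : ℝ) (m φ : R3) (v w : Fin 3 → R3)
    (hv : ∀ i, ⟪v i, m⟫ = 0) :
    ∑ i : Fin 3, ⟪v i - κ • cross (e i) m,
        cross (w i) m + cross φ (v i) - κ • cross (e i) (cross φ m)⟫
    = ∑ i : Fin 3, ⟪cross m (v i - κ • cross (e i) m), w i⟫
      + κ * ∑ i : Fin 3, (⟪v i, e i⟫ * ⟪m, φ⟫ - ⟪m, e i⟫ * ⟪v i, φ⟫) := by
  simp only [cross, e, Fin.sum_univ_three, PiLp.inner_apply, RCLike.inner_apply, conj_trivial,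
    PiLp.sub_apply, PiLp.add_apply, PiLp.smul_apply, smul_eq_mul, WithLp.equiv_symm_apply, PiLp.toLp_apply,
    EuclideanSpace.single_apply, Matrix.cons_val_zero, Matrix.cons_val_one, Matrix.head_cons,
    Matrix.cons_val_two, Matrix.tail_cons]
  simp only [Fin.reduceEq, if_true, if_false, reduceIte]
  norm_num
  ring
end
end

section
/- Let V be a real vector space, let a, p, n : V × V → ℝ be symmetric bilinear forms, let c : V × V → ℝ be a bilinear form, let ℓ : V → ℝ be a linear map, and let α, τ ∈ ℝ. Define E : V → ℝ by E(u) := (1/2)a(u,u) + c(u,u) − (1/2)p(u,u) − ℓ(u). Suppose m, v ∈ V satisfy α n(v,v) + τ a(v,v) + τ c(v,v) = −a(m,v) + p(m,v) + ℓ(v) − c(m,v) − c(v,m). Then E(m + τ v) = E(m) − α τ n(v,v) − (τ²/2) a(v,v) − (τ²/2) p(v,v). -/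
/-- Abstract discrete energy law (4.6) of Proposition 4.2 for the projection-free tangent
plane scheme. -/
theorem stmt_13 {V : Type*} [AddCommGroup V] [Module ℝ V]
    (a p n : V →ₗ[ℝ] V →ₗ[ℝ] ℝ) (c : V →ₗ[ℝ] V →ₗ[ℝ] ℝ) (ℓ : V →ₗ[ℝ] ℝ)
    (ha : ∀ x y, a x y = a y x) (hp : ∀ x y, p x y = p y x)
    (hn : ∀ x y, n x y = n y x)
    (α τ : ℝ) (E : V → ℝ)
    (hE : ∀ u, E u = (1/2) * a u u + c u u - (1/2) * p u u - ℓ u)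
    (m v : V)
    (hv : α * n v v + τ * a v v + τ * c v v
          = -(a m v) + p m v + ℓ v - c m v - c v m) :
    E (m + τ • v) = E m - α * τ * n v v - (τ^2/2) * a v v - (τ^2/2) * p v v := by
  simp only [hE, map_add, map_smul, LinearMap.add_apply, LinearMap.smul_apply, smul_eq_mul]
  have h1 := ha m v
  have h2 := hp m v
  set c1 : ℝ := -τ/2
  set c2 : ℝ := τ/2
  linear_combination τ * hv + c1*h1 + c2*h2
end
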